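/- arXiv:0903.5129 — 2 statements merged into one kernel-verified Lean document; each statement's English description precedes it below -/
import Mathlib

section
/- For every k with 2 ≤ k ≤ n−1, letting τ_k = (k, k+1) be the adjacent transposition, the matrix T P(τ_k) Tᵗ agrees with the n×n identity matrix in all entries except the 2×2 submatrix with rows and columns indexed by {n−k+1, n−k+2}, which equals R_k = [[−1/k, √(1−1/k²)], [√(1−1/k²), 1/k]]. -/
open Matrix

/-- The n×n matrix `U` from the paper: first row all ones; row `m` (1-based, m≥2)
has entries −1 in columns 1,…,n−m+1, entry n−m+1 in column n−m+2, and 0 afterwards.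
Indices are 0-based here, so row `i` corresponds to `m = i+1`. -/
noncomputable def Umat (n : ℕ) : Matrix (Fin n) (Fin n) ℝ :=
  Matrix.of fun i j =>
    if i.val = 0 then 1
    else if j.val < n - i.val then -1
    else if j.val = n - i.val then ((n : ℝ) - i.val)
    else 0

/-- The diagonal matrix `A` with `A₁₁ = 1/√n` and `A_kk = 1/√((n−k+1)(n−k+2))` for k ≥ 2
(1-based `k = i+1`). -/
noncomputable def Amat (n : ℕ) : Matrix (Fin n) (Fin n) ℝ :=
  Matrix.diagonal fun i =>
    if i.val = 0 then 1 / Real.sqrt n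
    else 1 / Real.sqrt (((n : ℝ) - i.val) * ((n : ℝ) - i.val + 1))

/-- The orthogonal transform `T = A U`. -/
noncomputable def Tmat (n : ℕ) : Matrix (Fin n) (Fin n) ℝ := Amat n * Umat n

/-- The permutation matrix `P(σ)` with `P(σ)_{i,j} = 1` iff `j = σ(i)`. -/
def Pmat (n : ℕ) (σ : Equiv.Perm (Fin n)) : Matrix (Fin n) (Fin n) ℝ :=
  Matrix.of fun i j => if j = σ i then 1 else 0

noncomputable def rowFun (n m q : ℕ) : ℝ :=
  if m = 0 then 1
  else if q < n - m then -1
  else if q = n - m then ((n : ℝ) - m)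
  else 0

lemma Umat_apply (n : ℕ) (i j : Fin n) : Umat n i j = rowFun n i.val j.val := rfl

lemma rowFun_top (n q : ℕ) : rowFun n 0 q = 1 := by unfold rowFun; rw [if_pos rfl]

lemma rowFun_lt (n m q : ℕ) (h : m ≠ 0) (h2 : q < n - m) : rowFun n m q = -1 := by
  unfold rowFun; rw [if_neg h, if_pos h2]

lemma rowFun_mid (n m q : ℕ) (h : m ≠ 0) (h2 : q = n - m) : rowFun n m q = (n:ℝ) - m := by
  unfold rowFun; rw [if_neg h, if_neg (by omega), if_pos h2]

lemma rowFun_gt (n m q : ℕ) (h : m ≠ 0) (h2 : n - m < q) : rowFun n m q = 0 := by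
  unfold rowFun; rw [if_neg h, if_neg (by omega), if_neg (by omega)]

lemma sum_step (n s : ℕ) (hs : s < n) (g : ℕ → ℝ) (c v : ℝ)
    (h1 : ∀ q, q < s → g q = c) (h2 : g s = v) (h3 : ∀ q, s < q → g q = 0) :
    ∑ q ∈ Finset.range n, g q = s * c + v := by
  have hsub : Finset.range (s+1) ⊆ Finset.range n := Finset.range_subset_range.2 hs
  rw [← Finset.sum_subset hsub (fun x hx hnx => h3 x (by
    simp only [Finset.mem_range] at hx hnx; omega))]
  rw [Finset.sum_range_succ, h2]
  rw [Finset.sum_congr rfl (fun q hq => h1 q (Finset.mem_range.1 hq)),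
    Finset.sum_const, nsmul_eq_mul, Finset.card_range]

lemma row_dot_le (n a b : ℕ) (ha : a < n) (hb : b < n) (hab : a ≤ b) :
    ∑ q ∈ Finset.range n, rowFun n a q * rowFun n b q =
      if a = b then (if a = 0 then (n:ℝ) else ((n:ℝ) - a) * ((n:ℝ) - a + 1)) else 0 := by
  rcases Nat.eq_zero_or_pos a with ha0 | ha0
  · subst ha0
    rcases Nat.eq_zero_or_pos b with hb0 | hb0
    · subst hb0
      simp [rowFun_top]
    · rw [if_neg (by omega)]
      rw [sum_step n (n-b) (by omega) _ (-1) ((n:ℝ) - b)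
        (fun q hq => by rw [rowFun_top, rowFun_lt n b q (by omega) hq, one_mul])
        (by rw [rowFun_top, rowFun_mid n b _ (by omega) rfl, one_mul])
        (fun q hq => by rw [rowFun_top, rowFun_gt n b q (by omega) hq, one_mul])]
      rw [Nat.cast_sub hb.le]; ring
  · rcases eq_or_lt_of_le hab with hab' | hab'
    · subst hab'
      rw [if_pos rfl, if_neg (by omega)]
      rw [sum_step n (n-a) (by omega) _ 1 (((n:ℝ) - a) * ((n:ℝ) - a))
        (fun q hq => by rw [rowFun_lt n a q (by omega) hq]; ring)
        (by rw [rowFun_mid n a _ (by omega) rfl])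
        (fun q hq => by rw [rowFun_gt n a q (by omega) hq]; ring)]
      rw [Nat.cast_sub ha.le]; ring
    · rw [if_neg (by omega)]
      rw [sum_step n (n-b) (by omega) _ 1 (-((n:ℝ) - b))
        (fun q hq => by
          rw [rowFun_lt n a q (by omega) (by omega), rowFun_lt n b q (by omega) hq]; ring)
        (by
          rw [rowFun_lt n a _ (by omega) (by omega), rowFun_mid n b _ (by omega) rfl]; ring)
        (fun q hq => by rw [rowFun_gt n b q (by omega) hq]; ring)]
      rw [Nat.cast_sub hb.le]; ring

lemma U_dot (n : ℕ) (i j : Fin n) :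
    ∑ q, Umat n i q * Umat n j q =
      if i = j then (if i.val = 0 then (n:ℝ)
        else ((n:ℝ) - i.val) * ((n:ℝ) - i.val + 1)) else 0 := by
  have key : ∀ (a b : Fin n), ∑ q : Fin n, Umat n a q * Umat n b q
      = ∑ q ∈ Finset.range n, rowFun n a.val q * rowFun n b.val q := by
    intro a b
    rw [← Fin.sum_univ_eq_sum_range (fun q => rowFun n a.val q * rowFun n b.val q) n]
    exact Finset.sum_congr rfl fun q _ => by rw [Umat_apply, Umat_apply]
  by_cases hij : i = j
  · subst hij
    rw [if_pos rfl, key, row_dot_le n i.val i.val i.isLt i.isLt le_rfl, if_pos rfl]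
  · rw [if_neg hij]
    have hv : i.val ≠ j.val := fun h => hij (Fin.ext h)
    rcases le_total i.val j.val with h | h
    · rw [key, row_dot_le n i.val j.val i.isLt j.isLt h, if_neg hv]
    · rw [key, Finset.sum_congr rfl
        (fun q _ => mul_comm (rowFun n i.val q) (rowFun n j.val q)),
        row_dot_le n j.val i.val j.isLt i.isLt h, if_neg (Ne.symm hv)]

noncomputable def dfun (n : ℕ) (i : Fin n) : ℝ :=
  if i.val = 0 then 1 / Real.sqrt n
  else 1 / Real.sqrt (((n : ℝ) - i.val) * ((n : ℝ) - i.val + 1))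

lemma Tmat_apply (n : ℕ) (i q : Fin n) : Tmat n i q = dfun n i * Umat n i q := by
  rw [Tmat, Amat, Matrix.diagonal_mul]; rfl

lemma T_dot (n : ℕ) (hn : 0 < n) (i j : Fin n) :
    ∑ q, Tmat n i q * Tmat n j q = if i = j then 1 else 0 := by
  have h : ∀ q : Fin n, Tmat n i q * Tmat n j q
      = dfun n i * dfun n j * (Umat n i q * Umat n j q) := fun q => by
    rw [Tmat_apply, Tmat_apply]; ring
  rw [Finset.sum_congr rfl (fun q _ => h q), ← Finset.mul_sum, U_dot]
  by_cases hij : i = j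
  · subst hij
    rw [if_pos rfl, if_pos rfl]
    by_cases h0 : i.val = 0
    · rw [if_pos h0]
      unfold dfun
      rw [if_pos h0, div_mul_div_comm, one_mul,
        Real.mul_self_sqrt (by positivity), one_div,
        inv_mul_cancel₀ (by positivity)]
    · rw [if_neg h0]
      have hi : (i.val : ℝ) < n := by exact_mod_cast i.isLt
      have hx : (0:ℝ) < ((n:ℝ) - i.val) * ((n:ℝ) - i.val + 1) := by nlinarith
      unfold dfun
      rw [if_neg h0, div_mul_div_comm, one_mul,
        Real.mul_self_sqrt hx.le, one_div, inv_mul_cancel₀ (ne_of_gt hx)]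
  · rw [if_neg hij, if_neg hij, mul_zero]

lemma sum_swap_pair {n : ℕ} (c₁ c₂ : Fin n) (h : c₁ ≠ c₂) (f g : Fin n → ℝ) :
    ∑ q, f (Equiv.swap c₁ c₂ q) * g q
      = (∑ q, f q * g q) - (f c₁ - f c₂) * (g c₁ - g c₂) := by
  have hd : ∀ (F : Fin n → ℝ), ∑ q, F q
      = ∑ q ∈ Finset.univ \ {c₁, c₂}, F q + (F c₁ + F c₂) := by
    intro F
    rw [Finset.sum_sdiff_eq_sub (Finset.subset_univ _), Finset.sum_pair h]
    ring
  rw [hd, hd (fun q => f q * g q)]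
  rw [Finset.sum_congr rfl (fun q hq => by
    simp only [Finset.mem_sdiff, Finset.mem_insert, Finset.mem_singleton] at hq
    rw [Equiv.swap_apply_of_ne_of_ne (by tauto) (by tauto)])]
  rw [Equiv.swap_apply_left, Equiv.swap_apply_right]
  ring

lemma mul_P_apply (n : ℕ) (σ : Equiv.Perm (Fin n)) (X : Matrix (Fin n) (Fin n) ℝ)
    (i q : Fin n) : (X * Pmat n σ) i q = X i (σ.symm q) := by
  simp only [Matrix.mul_apply, Pmat, Matrix.of_apply]
  rw [Finset.sum_eq_single (σ.symm q)]
  · rw [if_pos (by simp), mul_one]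
  · intro p _ hp
    rw [if_neg (fun hqe => hp (by rw [hqe, Equiv.symm_apply_apply])), mul_zero]
  · intro hmem; exact absurd (Finset.mem_univ _) hmem

lemma M_apply (n : ℕ) (hn : 0 < n) (c₁ c₂ : Fin n) (h : c₁ ≠ c₂) (i j : Fin n) :
    (Tmat n * Pmat n (Equiv.swap c₁ c₂) * (Tmat n)ᵀ) i j
      = (if i = j then 1 else 0)
        - (Tmat n i c₁ - Tmat n i c₂) * (Tmat n j c₁ - Tmat n j c₂) := by
  rw [Matrix.mul_apply]
  rw [Finset.sum_congr rfl (fun q _ => by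
    rw [mul_P_apply, Equiv.symm_swap, Matrix.transpose_apply])]
  rw [sum_swap_pair c₁ c₂ h, T_dot n hn i j]

lemma Dval_a (n k : ℕ) (hn : 3 ≤ n) (hk2 : 2 ≤ k) (hkn : k ≤ n - 1)
    (h1 : k - 1 < n) (h2 : k < n) (h3 : n - k < n) :
    Tmat n ⟨n-k, h3⟩ ⟨k-1, h1⟩ - Tmat n ⟨n-k, h3⟩ ⟨k, h2⟩
      = -((k:ℝ)+1) / Real.sqrt ((k:ℝ) * ((k:ℝ)+1)) := by
  have hc : ((n:ℝ) - ((n - k : ℕ) : ℝ)) = (k:ℝ) := by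
    rw [Nat.cast_sub (by omega)]; ring
  rw [Tmat_apply, Tmat_apply, Umat_apply, Umat_apply]
  unfold dfun
  rw [show ((⟨n-k,h3⟩ : Fin n) : ℕ) = n - k from rfl,
    show ((⟨k-1,h1⟩ : Fin n) : ℕ) = k - 1 from rfl,
    show ((⟨k,h2⟩ : Fin n) : ℕ) = k from rfl]
  rw [if_neg (by omega : ¬(n - k = 0)),
    rowFun_lt n (n-k) (k-1) (by omega) (by omega),
    rowFun_mid n (n-k) k (by omega) (by omega), hc]
  ring

lemma Dval_b (n k : ℕ) (hn : 3 ≤ n) (hk2 : 2 ≤ k) (hkn : k ≤ n - 1)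
    (h1 : k - 1 < n) (h2 : k < n) (h4 : n - k + 1 < n) :
    Tmat n ⟨n-k+1, h4⟩ ⟨k-1, h1⟩ - Tmat n ⟨n-k+1, h4⟩ ⟨k, h2⟩
      = ((k:ℝ)-1) / Real.sqrt (((k:ℝ)-1) * (k:ℝ)) := by
  have hc : ((n:ℝ) - ((n - k + 1 : ℕ) : ℝ)) = (k:ℝ) - 1 := by
    rw [Nat.cast_add, Nat.cast_sub (by omega : k ≤ n), Nat.cast_one]; ring
  rw [Tmat_apply, Tmat_apply, Umat_apply, Umat_apply]
  unfold dfun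
  rw [show ((⟨n-k+1,h4⟩ : Fin n) : ℕ) = n - k + 1 from rfl,
    show ((⟨k-1,h1⟩ : Fin n) : ℕ) = k - 1 from rfl,
    show ((⟨k,h2⟩ : Fin n) : ℕ) = k from rfl]
  rw [if_neg (by omega : ¬(n - k + 1 = 0)),
    rowFun_mid n (n-k+1) (k-1) (by omega) (by omega),
    rowFun_gt n (n-k+1) k (by omega) (by omega), hc,
    show ((k:ℝ) - 1 + 1) = (k:ℝ) by ring]
  ring

lemma Dval_zero (n k : ℕ) (hn : 3 ≤ n) (hk2 : 2 ≤ k) (hkn : k ≤ n - 1)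
    (h1 : k - 1 < n) (h2 : k < n) (i : Fin n)
    (hia : i.val ≠ n - k) (hib : i.val ≠ n - k + 1) :
    Tmat n i ⟨k-1,h1⟩ - Tmat n i ⟨k,h2⟩ = 0 := by
  rw [Tmat_apply, Tmat_apply, ← mul_sub]
  have hi := i.isLt
  have hU : Umat n i ⟨k-1,h1⟩ - Umat n i ⟨k,h2⟩ = 0 := by
    rw [Umat_apply, Umat_apply,
      show ((⟨k-1,h1⟩ : Fin n) : ℕ) = k - 1 from rfl,
      show ((⟨k,h2⟩ : Fin n) : ℕ) = k from rfl]
    by_cases h0 : i.val = 0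
    · rw [h0, rowFun_top, rowFun_top]; ring
    · rcases lt_trichotomy (n - i.val) (k-1) with h | h | h
      · rw [rowFun_gt n i.val (k-1) h0 h, rowFun_gt n i.val k h0 (by omega)]; ring
      · exfalso; omega
      · rw [rowFun_lt n i.val (k-1) h0 (by omega),
          rowFun_lt n i.val k h0 (by omega)]; ring
  rw [hU, mul_zero]


/-- For 2 ≤ k ≤ n−1 and τ_k = (k, k+1), the matrix T P(τ_k) Tᵗ agrees
with the identity except in the 2×2 block with rows/columns n−k+1, n−k+2 (1-based),
which equals R_k = [[−1/k, √(1−1/k²)], [√(1−1/k²), 1/k]]. -/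
theorem stmt_3 (n k : ℕ) (hn : 3 ≤ n) (hk2 : 2 ≤ k) (hkn : k ≤ n - 1) :
    let M := Tmat n * Pmat n (Equiv.swap ⟨k - 1, by omega⟩ ⟨k, by omega⟩) * (Tmat n)ᵀ
    let a : Fin n := ⟨n - k, by omega⟩
    let b : Fin n := ⟨n - k + 1, by omega⟩
    M a a = -1 / k ∧
    M a b = Real.sqrt (1 - 1 / (k : ℝ) ^ 2) ∧
    M b a = Real.sqrt (1 - 1 / (k : ℝ) ^ 2) ∧
    M b b = 1 / k ∧
    ∀ i j : Fin n, ¬((i = a ∨ i = b) ∧ (j = a ∨ j = b)) →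
      M i j = if i = j then 1 else 0 := by

  intro M a b
  have hn0 : 0 < n := by omega
  have h1 : k - 1 < n := by omega
  have h2 : k < n := by omega
  have h3 : n - k < n := by omega
  have h4 : n - k + 1 < n := by omega
  have hc12 : (⟨k-1, h1⟩ : Fin n) ≠ ⟨k, h2⟩ := by
    simp only [ne_eq, Fin.mk.injEq]; omega
  have hM : ∀ i j : Fin n, M i j = (if i = j then (1:ℝ) else 0)
      - (Tmat n i ⟨k-1,h1⟩ - Tmat n i ⟨k,h2⟩)
        * (Tmat n j ⟨k-1,h1⟩ - Tmat n j ⟨k,h2⟩) :=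
    fun i j => M_apply n hn0 _ _ hc12 i j
  have ha : a = ⟨n - k, h3⟩ := rfl
  have hb : b = ⟨n - k + 1, h4⟩ := rfl
  have hDa := Dval_a n k hn hk2 hkn h1 h2 h3
  have hDb := Dval_b n k hn hk2 hkn h1 h2 h4
  have hk0 : (0:ℝ) < (k:ℝ) := by exact_mod_cast (by omega : 0 < k)
  have hk1 : (1:ℝ) < (k:ℝ) := by exact_mod_cast (by omega : 1 < k)
  have hkne : (k:ℝ) ≠ 0 := hk0.ne'
  have hx1 : (0:ℝ) < (k:ℝ) * ((k:ℝ)+1) := by nlinarith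
  have hx2 : (0:ℝ) < ((k:ℝ)-1) * (k:ℝ) := by nlinarith
  have hs1 : Real.sqrt ((k:ℝ) * ((k:ℝ)+1)) ^ 2 = (k:ℝ) * ((k:ℝ)+1) :=
    Real.sq_sqrt hx1.le
  have hs2 : Real.sqrt (((k:ℝ)-1) * (k:ℝ)) ^ 2 = ((k:ℝ)-1) * (k:ℝ) :=
    Real.sq_sqrt hx2.le
  have hs1ne : Real.sqrt ((k:ℝ) * ((k:ℝ)+1)) ≠ 0 :=
    ne_of_gt (Real.sqrt_pos.2 hx1)
  have hs2ne : Real.sqrt (((k:ℝ)-1) * (k:ℝ)) ≠ 0 :=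
    ne_of_gt (Real.sqrt_pos.2 hx2)
  have hq : (0:ℝ) ≤ (k:ℝ)^2 - 1 := by nlinarith
  have hm : Real.sqrt ((k:ℝ)^2-1) * Real.sqrt ((k:ℝ)^2-1) = (k:ℝ)^2-1 :=
    Real.mul_self_sqrt hq
  have hsqne : Real.sqrt ((k:ℝ)^2-1) ≠ 0 := ne_of_gt (Real.sqrt_pos.2 (by nlinarith))
  have hss : Real.sqrt ((k:ℝ) * ((k:ℝ)+1)) * Real.sqrt (((k:ℝ)-1) * (k:ℝ))
      = (k:ℝ) * Real.sqrt ((k:ℝ)^2 - 1) := by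
    rw [← Real.sqrt_mul hx1.le,
      show ((k:ℝ) * ((k:ℝ)+1)) * (((k:ℝ)-1) * (k:ℝ)) = (k:ℝ)^2 * ((k:ℝ)^2 - 1) by ring,
      Real.sqrt_mul (by positivity), Real.sqrt_sq hk0.le]
  have hR : Real.sqrt (1 - 1/(k:ℝ)^2) = Real.sqrt ((k:ℝ)^2-1) / (k:ℝ) := by
    rw [show (1 - 1/(k:ℝ)^2) = ((k:ℝ)^2-1)/(k:ℝ)^2 by field_simp,
      Real.sqrt_div hq, Real.sqrt_sq hk0.le]
  have key : (0:ℝ) - (-((k:ℝ)+1) / Real.sqrt ((k:ℝ) * ((k:ℝ)+1)))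
      * (((k:ℝ)-1) / Real.sqrt (((k:ℝ)-1) * (k:ℝ))) = Real.sqrt (1 - 1/(k:ℝ)^2) := by
    rw [hR, show (0:ℝ) - (-((k:ℝ)+1) / Real.sqrt ((k:ℝ) * ((k:ℝ)+1)))
        * (((k:ℝ)-1) / Real.sqrt (((k:ℝ)-1) * (k:ℝ)))
        = (((k:ℝ)+1) * ((k:ℝ)-1))
          / (Real.sqrt ((k:ℝ) * ((k:ℝ)+1)) * Real.sqrt (((k:ℝ)-1) * (k:ℝ))) by ring,
      hss, div_eq_div_iff (by positivity) hkne]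
    linear_combination (-(k:ℝ)) * hm
  refine ⟨?_, ?_, ?_, ?_, ?_⟩
  · rw [hM a a, ha, hDa, if_pos rfl,
      show (-((k:ℝ)+1) / Real.sqrt ((k:ℝ) * ((k:ℝ)+1)))
          * (-((k:ℝ)+1) / Real.sqrt ((k:ℝ) * ((k:ℝ)+1)))
        = (((k:ℝ)+1) * ((k:ℝ)+1)) / Real.sqrt ((k:ℝ) * ((k:ℝ)+1)) ^ 2 by ring, hs1]
    field_simp
    ring
  · rw [hM a b, ha, hb, hDa, hDb, if_neg (by simp only [ne_eq, Fin.mk.injEq]; omega)]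
    exact key
  · rw [hM b a, ha, hb, hDa, hDb, if_neg (by simp only [ne_eq, Fin.mk.injEq]; omega),
      mul_comm]
    exact key
  · rw [hM b b, hb, hDb, if_pos rfl,
      show (((k:ℝ)-1) / Real.sqrt (((k:ℝ)-1) * (k:ℝ)))
          * (((k:ℝ)-1) / Real.sqrt (((k:ℝ)-1) * (k:ℝ)))
        = (((k:ℝ)-1) * ((k:ℝ)-1)) / Real.sqrt (((k:ℝ)-1) * (k:ℝ)) ^ 2 by ring, hs2]
    have hkm1 : (k:ℝ) - 1 ≠ 0 := sub_ne_zero.2 hk1.ne'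
    field_simp
    try ring
    try simp
  · intro i j hcond
    rw [hM i j]
    rcases not_and_or.1 hcond with hi | hj
    · push_neg at hi
      rw [Dval_zero n k hn hk2 hkn h1 h2 i
        (fun hv => hi.1 (by rw [ha]; exact Fin.ext hv))
        (fun hv => hi.2 (by rw [hb]; exact Fin.ext hv)), zero_mul, sub_zero]
    · push_neg at hj
      rw [Dval_zero n k hn hk2 hkn h1 h2 j
        (fun hv => hj.1 (by rw [ha]; exact Fin.ext hv))
        (fun hv => hj.2 (by rw [hb]; exact Fin.ext hv)), mul_zero, sub_zero]
end

section
/- If C is an n×n complex matrix that commutes with T P(σ) Tᵗ for every σ ∈ S_n, then there exist scalars λ₁, λ₂ ∈ ℂ such that C is the block-diagonal matrix λ₁ ⊕ λ₂ I_{n−1} (i.e., C_{1,1} = λ₁, C_{i,i} = λ₂ for 2 ≤ i ≤ n, and all off-diagonal entries of C are 0). -/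
open Matrix

def uent (m j : ℕ) : ℝ := if j < m then -1 else if j = m then (m:ℝ) else 0

/-- entry function for rows `m ≥ 1` of `U` (with `m = n - i`). -/

lemma sum_uent {n m : ℕ} (hm : m < n) :
    ∑ j ∈ Finset.range n, uent m j = 0 := by
  rw [← Finset.sum_subset (Finset.range_subset_range.2 hm)]
  · rw [Finset.sum_range_succ]
    have : ∀ j ∈ Finset.range m, uent m j = -1 := by
      intro j hj; simp [uent, Finset.mem_range.1 hj]
    rw [Finset.sum_congr rfl this]
    simp [uent]
  · intro j _ hj
    simp only [Finset.mem_range, not_lt] at hj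
    have h1 : ¬ (j < m) := by omega
    have h2 : j ≠ m := by omega
    simp [uent, h1, h2]

lemma sum_uent_sq {n m : ℕ} (hm : m < n) :
    ∑ j ∈ Finset.range n, uent m j * uent m j = (m:ℝ) * ((m:ℝ) + 1) := by
  rw [← Finset.sum_subset (Finset.range_subset_range.2 hm)]
  · rw [Finset.sum_range_succ]
    have : ∀ j ∈ Finset.range m, uent m j * uent m j = 1 := by
      intro j hj; simp [uent, Finset.mem_range.1 hj]
    rw [Finset.sum_congr rfl this]
    simp [uent]; ring
  · intro j _ hj
    simp only [Finset.mem_range, not_lt] at hj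
    have h1 : ¬ (j < m) := by omega
    have h2 : j ≠ m := by omega
    simp [uent, h1, h2]

lemma uent_mul {m m' j : ℕ} (h : m' < m) : uent m j * uent m' j = -(uent m' j) := by
  unfold uent
  rcases lt_trichotomy j m' with hj | hj | hj
  · simp [hj, show j < m by omega]
  · simp [hj, show m' < m by omega, show ¬ (m' < m') from lt_irrefl _]
  · have h1 : ¬ (j < m') := by omega
    have h2 : j ≠ m' := by omega
    simp [h1, h2]

lemma Umat_apply_ne {n : ℕ} {i j : Fin n} (hi : i.val ≠ 0) :
    Umat n i j = uent (n - i.val) j.val := by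
  have hle : (i:ℕ) ≤ n := le_of_lt i.isLt
  simp only [Umat, uent, Matrix.of_apply, hi, if_false]
  have : ((n - i.val : ℕ) : ℝ) = (n : ℝ) - i.val := by
    push_cast [Nat.cast_sub hle]; ring
  rw [this]

lemma Tmat_apply_s14 {n : ℕ} (i j : Fin n) :
    Tmat n i j = (if i.val = 0 then 1 / Real.sqrt n
      else 1 / Real.sqrt (((n : ℝ) - i.val) * ((n : ℝ) - i.val + 1))) * Umat n i j := by
  simp [Tmat, Amat, Matrix.diagonal_mul]

lemma TTt {n : ℕ} (hn : 2 ≤ n) : Tmat n * (Tmat n)ᵀ = 1 := by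
  ext i k
  rw [Matrix.mul_apply]
  simp only [Matrix.transpose_apply, Tmat_apply_s14]
  have key : ∀ i k : Fin n, (i:ℕ) < (k:ℕ) →
      ∑ j : Fin n, Umat n i j * Umat n k j = if (i:ℕ) = 0 then 0 else 0 := by
    intro i k hik
    have hk : (k:ℕ) ≠ 0 := by omega
    have hmk : n - (k:ℕ) < n := by omega
    by_cases hi : (i:ℕ) = 0
    · simp only [hi, if_true]
      have : ∀ j : Fin n, Umat n i j * Umat n k j = uent (n - k.val) j.val := by
        intro j
        rw [Umat_apply_ne hk]
        simp [Umat, hi]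
      rw [Finset.sum_congr rfl (fun j _ => this j)]
      rw [Fin.sum_univ_eq_sum_range (fun j => uent (n - k.val) j)]
      exact sum_uent hmk
    · simp only [hi, if_false]
      have hmm : n - (k:ℕ) < n - (i:ℕ) := by omega
      have : ∀ j : Fin n, Umat n i j * Umat n k j = -(uent (n - k.val) j.val) := by
        intro j
        rw [Umat_apply_ne hk, Umat_apply_ne hi]
        exact uent_mul hmm
      rw [Finset.sum_congr rfl (fun j _ => this j)]
      rw [Finset.sum_neg_distrib]
      rw [Fin.sum_univ_eq_sum_range (fun j => uent (n - k.val) j)]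
      rw [sum_uent hmk]; ring
  have factor : ∀ (a b : ℝ) (i k : Fin n),
      ∑ j : Fin n, a * Umat n i j * (b * Umat n k j)
        = a * b * ∑ j : Fin n, Umat n i j * Umat n k j := by
    intro a b i k
    rw [Finset.mul_sum]
    exact Finset.sum_congr rfl (fun j _ => by ring)
  rcases lt_trichotomy (i:ℕ) (k:ℕ) with h | h | h
  · have hne : i ≠ k := fun e => by simp [e] at h
    rw [Matrix.one_apply_ne hne, factor, key i k h]
    simp
  · have he : i = k := Fin.ext h
    subst he
    rw [Matrix.one_apply_eq, factor]
    by_cases hi : (i:ℕ) = 0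
    · have hsum : ∑ j : Fin n, Umat n i j * Umat n i j = (n:ℝ) := by
        have : ∀ j : Fin n, Umat n i j * Umat n i j = 1 := by
          intro j; simp [Umat, hi]
        rw [Finset.sum_congr rfl (fun j _ => this j)]
        simp
      rw [hsum]
      simp only [hi, if_true]
      have h0 : (0:ℝ) < Real.sqrt n := Real.sqrt_pos.2 (by positivity)
      field_simp
      rw [Real.sq_sqrt (by positivity)]
    · have hm1 : 1 ≤ n - (i:ℕ) := by have := i.isLt; omega
      have hmk : n - (i:ℕ) < n := by omega
      have hsum : ∑ j : Fin n, Umat n i j * Umat n i j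
          = ((n - (i:ℕ) : ℕ):ℝ) * (((n - (i:ℕ) : ℕ):ℝ) + 1) := by
        have : ∀ j : Fin n, Umat n i j * Umat n i j
            = uent (n - i.val) j.val * uent (n - i.val) j.val := by
          intro j; rw [Umat_apply_ne hi]
        rw [Finset.sum_congr rfl (fun j _ => this j)]
        rw [Fin.sum_univ_eq_sum_range (fun j => uent (n - i.val) j * uent (n - i.val) j)]
        exact sum_uent_sq hmk
      have hcast : ((n - (i:ℕ) : ℕ):ℝ) = (n:ℝ) - (i:ℕ) := by
        have : (i:ℕ) ≤ n := i.isLt.le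
        push_cast [Nat.cast_sub this]; ring
      rw [hsum, hcast]
      simp only [hi, if_false]
      set x : ℝ := ((n:ℝ) - (i:ℕ)) * ((n:ℝ) - (i:ℕ) + 1) with hx
      have hxpos : 0 < x := by
        have : (1:ℝ) ≤ (n:ℝ) - (i:ℕ) := by
          rw [← hcast]; exact_mod_cast hm1
        nlinarith
      have h0 : (0:ℝ) < Real.sqrt x := Real.sqrt_pos.2 hxpos
      field_simp
      rw [Real.sq_sqrt hxpos.le]
  · have hne : i ≠ k := fun e => by simp [e] at h
    rw [Matrix.one_apply_ne hne, factor]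
    have : ∑ j : Fin n, Umat n i j * Umat n k j
        = ∑ j : Fin n, Umat n k j * Umat n i j :=
      Finset.sum_congr rfl (fun j _ => mul_comm _ _)
    rw [this, key k i h]
    simp

def Jmat (n : ℕ) : Matrix (Fin n) (Fin n) ℝ := Matrix.of fun _ _ => 1

lemma Tmat_rowsum {n : ℕ} (hn : 2 ≤ n) (i : Fin n) :
    ∑ j : Fin n, Tmat n i j = if (i:ℕ) = 0 then Real.sqrt n else 0 := by
  by_cases hi : (i:ℕ) = 0
  · simp only [hi, if_true]
    have : ∀ j : Fin n, Tmat n i j = 1 / Real.sqrt n := by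
      intro j; rw [Tmat_apply_s14]; simp [Umat, hi]
    rw [Finset.sum_congr rfl (fun j _ => this j)]
    rw [Finset.sum_const, Finset.card_univ, Fintype.card_fin]
    have h0 : (0:ℝ) < Real.sqrt n := Real.sqrt_pos.2 (by positivity)
    rw [nsmul_eq_mul, mul_one_div, Real.div_sqrt]
  · simp only [hi, if_false]
    have hmk : n - (i:ℕ) < n := by have := i.isLt; omega
    have : ∀ j : Fin n, Tmat n i j
        = (1 / Real.sqrt (((n : ℝ) - i.val) * ((n : ℝ) - i.val + 1))) * uent (n - i.val) j.val := by
      intro j; rw [Tmat_apply_s14, Umat_apply_ne hi]; simp [hi]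
    rw [Finset.sum_congr rfl (fun j _ => this j), ← Finset.mul_sum]
    rw [Fin.sum_univ_eq_sum_range (fun j => uent (n - i.val) j), sum_uent hmk, mul_zero]

lemma TJTt {n : ℕ} (hn : 2 ≤ n) :
    Tmat n * Jmat n * (Tmat n)ᵀ
      = Matrix.of (fun (i j : Fin n) => if (i:ℕ) = 0 ∧ (j:ℕ) = 0 then (n:ℝ) else 0) := by
  ext i j
  rw [Matrix.mul_apply]
  have h1 : ∀ k : Fin n, (Tmat n * Jmat n) i k = if (i:ℕ) = 0 then Real.sqrt n else 0 := by
    intro k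
    rw [Matrix.mul_apply]
    simp only [Jmat, Matrix.of_apply, mul_one]
    exact Tmat_rowsum hn i
  have : ∀ k : Fin n, (Tmat n * Jmat n) i k * (Tmat n)ᵀ k j
      = (if (i:ℕ) = 0 then Real.sqrt n else 0) * Tmat n j k := by
    intro k; rw [h1, Matrix.transpose_apply]
  rw [Finset.sum_congr rfl (fun k _ => this k), ← Finset.mul_sum, Tmat_rowsum hn j]
  by_cases hi : (i:ℕ) = 0 <;> by_cases hj : (j:ℕ) = 0 <;>
    simp [hi, hj, Real.mul_self_sqrt (by positivity : (0:ℝ) ≤ (n:ℝ))]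

lemma exists_perm_two {n : ℕ} {i j i' j' : Fin n} (hij : i ≠ j) (h' : i' ≠ j') :
    ∃ σ : Equiv.Perm (Fin n), σ i = i' ∧ σ j = j' := by
  have h1 : Equiv.swap i i' j ≠ i' := by
    rcases eq_or_ne j i' with rfl | hji'
    · rw [Equiv.swap_apply_right]; exact fun e => hij e
    · rw [Equiv.swap_apply_of_ne_of_ne (Ne.symm hij) hji']; exact hji'
  refine ⟨(Equiv.swap i i').trans (Equiv.swap (Equiv.swap i i' j) j'), ?_, ?_⟩
  · simp only [Equiv.trans_apply, Equiv.swap_apply_left]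
    exact Equiv.swap_apply_of_ne_of_ne (Ne.symm h1) h'
  · simp only [Equiv.trans_apply, Equiv.swap_apply_left]

lemma perm_comm_entry {n : ℕ} (D : Matrix (Fin n) (Fin n) ℂ) (σ : Equiv.Perm (Fin n))
    (h : D * (Pmat n σ).map (fun x => (x:ℂ)) = (Pmat n σ).map (fun x => (x:ℂ)) * D)
    (i j : Fin n) : D (σ i) (σ j) = D i j := by
  have e : (D * (Pmat n σ).map (fun x => (x:ℂ))) i (σ j)
      = ((Pmat n σ).map (fun x => (x:ℂ)) * D) i (σ j) := by rw [h]
  rw [Matrix.mul_apply, Matrix.mul_apply] at e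
  simp only [Pmat, Matrix.map_apply, Matrix.of_apply, apply_ite, Complex.ofReal_one,
    Complex.ofReal_zero, mul_ite, mul_one, mul_zero, ite_mul, one_mul, zero_mul,
    EmbeddingLike.apply_eq_iff_eq] at e
  rw [Finset.sum_ite_eq Finset.univ j (fun k => D i k),
    Finset.sum_ite_eq' Finset.univ (σ i) (fun k => D k (σ j))] at e
  simpa using e.symm

/-- If C is an n×n complex matrix commuting with T P(σ) Tᵗ for every
σ ∈ Sₙ, then C = λ₁ ⊕ λ₂ I_{n−1} for some scalars λ₁, λ₂ ∈ ℂ. -/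
theorem stmt_14 (n : ℕ) (hn : 2 ≤ n) (C : Matrix (Fin n) (Fin n) ℂ)
    (hC : ∀ σ : Equiv.Perm (Fin n),
      C * (Tmat n * Pmat n σ * (Tmat n)ᵀ).map (fun x => (x : ℂ)) =
        (Tmat n * Pmat n σ * (Tmat n)ᵀ).map (fun x => (x : ℂ)) * C) :
    ∃ l1 l2 : ℂ, C = Matrix.diagonal (fun i => if i.val = 0 then l1 else l2) := by
  have hmap : ∀ M N : Matrix (Fin n) (Fin n) ℝ,
      (M * N).map (fun x => (x:ℂ)) = M.map (fun x => (x:ℂ)) * N.map (fun x => (x:ℂ)) := by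
    intro M N
    exact Matrix.map_mul (f := Complex.ofRealHom)
  set Tc : Matrix (Fin n) (Fin n) ℂ := (Tmat n).map (fun x => (x:ℂ)) with hTcdef
  have hTct : ((Tmat n)ᵀ).map (fun x => (x:ℂ)) = Tcᵀ := by
    rw [hTcdef, Matrix.transpose_map]
  have hTc1 : Tc * Tcᵀ = 1 := by
    have h := congrArg (fun M : Matrix (Fin n) (Fin n) ℝ => M.map (fun x => (x:ℂ))) (TTt hn)
    rw [hmap, hTct] at h
    rw [h]
    ext i j
    simp [Matrix.map_apply, Matrix.one_apply, apply_ite]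
  have hTc2 : Tcᵀ * Tc = 1 := mul_eq_one_comm.mp hTc1
  set D : Matrix (Fin n) (Fin n) ℂ := Tcᵀ * C * Tc with hDdef
  have hDP : ∀ σ : Equiv.Perm (Fin n),
      D * (Pmat n σ).map (fun x => (x:ℂ)) = (Pmat n σ).map (fun x => (x:ℂ)) * D := by
    intro σ
    set P : Matrix (Fin n) (Fin n) ℂ := (Pmat n σ).map (fun x => (x:ℂ)) with hPdef
    have hC' : C * (Tc * P * Tcᵀ) = (Tc * P * Tcᵀ) * C := by
      have := hC σ
      rw [hmap, hmap, hTct] at this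
      exact this
    calc D * P = (Tcᵀ * C * Tc) * P * (Tcᵀ * Tc) := by rw [hTc2, mul_one]
      _ = Tcᵀ * (C * (Tc * P * Tcᵀ)) * Tc := by simp only [Matrix.mul_assoc]
      _ = Tcᵀ * ((Tc * P * Tcᵀ) * C) * Tc := by rw [hC']
      _ = (Tcᵀ * Tc) * (P * (Tcᵀ * C * Tc)) := by simp only [Matrix.mul_assoc]
      _ = P * D := by rw [hTc2, one_mul]
  have hperm : ∀ (σ : Equiv.Perm (Fin n)) (i j : Fin n), D (σ i) (σ j) = D i j :=
    fun σ => perm_comm_entry D σ (hDP σ)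
  have h0n : 0 < n := by omega
  have h1n : 1 < n := by omega
  set i0 : Fin n := ⟨0, h0n⟩
  set i1 : Fin n := ⟨1, h1n⟩
  have hne01 : i0 ≠ i1 := by simp [i0, i1, Fin.ext_iff]
  set a : ℂ := D i0 i0 with ha
  set b : ℂ := D i0 i1 with hb
  have hDentry : ∀ i j : Fin n, D i j = if i = j then a else b := by
    intro i j
    by_cases h : i = j
    · subst h
      rw [if_pos rfl]
      have := hperm (Equiv.swap i i0) i i
      rw [Equiv.swap_apply_left] at this
      exact this.symm
    · rw [if_neg h]
      obtain ⟨σ, h1, h2⟩ := exists_perm_two h hne01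
      have := hperm σ i j
      rw [h1, h2] at this
      exact this.symm
  have hCD : C = Tc * D * Tcᵀ := by
    calc C = (Tc * Tcᵀ) * C * (Tc * Tcᵀ) := by rw [hTc1, one_mul, mul_one]
      _ = Tc * (Tcᵀ * C * Tc) * Tcᵀ := by simp only [Matrix.mul_assoc]
      _ = Tc * D * Tcᵀ := rfl
  set Jc : Matrix (Fin n) (Fin n) ℂ := (Jmat n).map (fun x => (x:ℂ)) with hJcdef
  have hDeq : D = (a - b) • (1 : Matrix (Fin n) (Fin n) ℂ) + b • Jc := by
    ext i j
    rw [hDentry i j]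
    by_cases h : i = j <;>
      simp [h, hJcdef, Jmat, Matrix.one_apply, Matrix.map_apply]
  have hTJT : Tc * Jc * Tcᵀ
      = Matrix.of (fun (i j : Fin n) => if (i:ℕ) = 0 ∧ (j:ℕ) = 0 then (n:ℂ) else 0) := by
    have h := congrArg (fun M : Matrix (Fin n) (Fin n) ℝ => M.map (fun x => (x:ℂ))) (TJTt hn)
    rw [hmap, hmap, hTct] at h
    rw [h]
    ext i j
    simp only [Matrix.map_apply, Matrix.of_apply, apply_ite, Complex.ofReal_natCast,
      Complex.ofReal_zero]
    split_ifs with hc <;> simp [hc]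
  refine ⟨(a - b) + b * n, a - b, ?_⟩
  rw [hCD, hDeq]
  rw [Matrix.mul_add, Matrix.add_mul]
  rw [Matrix.mul_smul, Matrix.smul_mul, Matrix.mul_smul, Matrix.smul_mul, Matrix.mul_one]
  rw [hTc1, hTJT]
  ext i j
  by_cases h : i = j
  · subst h
    by_cases hi : (i:ℕ) = 0 <;>
      simp [hi, Matrix.one_apply, Matrix.diagonal_apply]
  · have hnz : ¬ ((i:ℕ) = 0 ∧ (j:ℕ) = 0) := by
      rintro ⟨h1, h2⟩
      exact h (Fin.ext (h1.trans h2.symm))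
    simp [Matrix.one_apply_ne h, hnz, Matrix.diagonal_apply_ne _ h]
end
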